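/- For every integer k ≥ 1, the function φ_k(y) = y^{−2}·Σ_{n=0}^{k} (binom(k,n)/(2n+1)!!)·y^{2n} satisfies, for all y > 0, the eigenvalue equation (1/2)·φ_k''(y) + (3/y + y/2)·φ_k'(y) + (3/y² − 1/2)·φ_k(y) = (k − 3/2)·φ_k(y). -/

import Mathlib

open Filter Set

/-- The eigenfunction `φ_k(y) = y^{-2} Σ_{n=0}^k (binom(k,n)/(2n+1)!!) y^{2n}`. -/
noncomputable def phik (k : ℕ) (y : ℝ) : ℝ :=
  y ^ (-2 : ℤ) * ∑ n ∈ Finset.range (k + 1),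
    ((k.choose n : ℝ) / (Nat.doubleFactorial (2 * n + 1) : ℝ)) * y ^ (2 * n)

noncomputable def ck (k n : ℕ) : ℝ :=
  (k.choose n : ℝ) / (Nat.doubleFactorial (2 * n + 1) : ℝ)

noncomputable def g0 (k : ℕ) (y : ℝ) : ℝ :=
  ∑ n ∈ Finset.range (k + 1), ck k n * y ^ (2 * (n : ℤ) - 2)

noncomputable def g1 (k : ℕ) (y : ℝ) : ℝ :=
  ∑ n ∈ Finset.range (k + 1),
    ck k n * (((2 * (n : ℤ) - 2 : ℤ) : ℝ) * y ^ (2 * (n : ℤ) - 2 - 1))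

noncomputable def g2 (k : ℕ) (y : ℝ) : ℝ :=
  ∑ n ∈ Finset.range (k + 1),
    ck k n * (((2 * (n : ℤ) - 2 : ℤ) : ℝ) *
      (((2 * (n : ℤ) - 2 - 1 : ℤ) : ℝ) * y ^ (2 * (n : ℤ) - 2 - 1 - 1)))

lemma phik_eq (k : ℕ) {y : ℝ} (hy : y ≠ 0) : phik k y = g0 k y := by
  unfold phik g0 ck
  rw [Finset.mul_sum]
  refine Finset.sum_congr rfl fun n _ => ?_
  rw [← zpow_natCast y (2 * n), ← mul_assoc, mul_comm (y ^ (-2 : ℤ)), mul_assoc,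
    ← zpow_add₀ hy]
  congr 1

lemma g0_hasDeriv (k : ℕ) {y : ℝ} (hy : y ≠ 0) : HasDerivAt (g0 k) (g1 k y) y := by
  unfold g0 g1
  exact HasDerivAt.fun_sum fun n _ =>
    ((hasDerivAt_zpow (2 * (n : ℤ) - 2) y (Or.inl hy)).const_mul (ck k n))

lemma g1_hasDeriv (k : ℕ) {y : ℝ} (hy : y ≠ 0) : HasDerivAt (g1 k) (g2 k y) y := by
  unfold g1 g2
  exact HasDerivAt.fun_sum fun n _ =>
    (((hasDerivAt_zpow (2 * (n : ℤ) - 2 - 1) y (Or.inl hy)).const_mul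
      (((2 * (n : ℤ) - 2 : ℤ) : ℝ))).const_mul (ck k n))

lemma deriv_phik (k : ℕ) {y : ℝ} (hy : y ≠ 0) : deriv (phik k) y = g1 k y := by
  have h1 : phik k =ᶠ[nhds y] g0 k := by
    filter_upwards [eventually_ne_nhds hy] with z hz using phik_eq k hz
  rw [h1.deriv_eq, (g0_hasDeriv k hy).deriv]

lemma deriv2_phik (k : ℕ) {y : ℝ} (hy : y ≠ 0) :
    deriv (deriv (phik k)) y = g2 k y := by
  have h1 : deriv (phik k) =ᶠ[nhds y] g1 k := by
    filter_upwards [eventually_ne_nhds hy] with z hz using deriv_phik k hz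
  rw [h1.deriv_eq, (g1_hasDeriv k hy).deriv]

lemma key (k : ℕ) {y : ℝ} (hy : y ≠ 0) :
    ∑ n ∈ Finset.range (k + 1),
        ck k n * (2 * (n : ℝ) ^ 2 + n) * y ^ (2 * (n : ℤ) - 4)
      = ∑ n ∈ Finset.range (k + 1),
        ck k n * ((k : ℝ) - n) * y ^ (2 * (n : ℤ) - 2) := by
  rw [Finset.sum_range_succ' _ k, Finset.sum_range_succ]
  have h0 : ck k 0 * (2 * ((0 : ℕ) : ℝ) ^ 2 + ((0 : ℕ) : ℝ)) * y ^ (2 * ((0 : ℕ) : ℤ) - 4) = 0 := by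
    norm_num
  have hk0 : ck k k * ((k : ℝ) - k) * y ^ (2 * (k : ℤ) - 2) = 0 := by
    norm_num
  rw [h0, hk0, add_zero, add_zero]
  refine Finset.sum_congr rfl fun i hi => ?_
  have hik : i < k := Finset.mem_range.mp hi
  have hexp : 2 * ((i + 1 : ℕ) : ℤ) - 4 = 2 * (i : ℤ) - 2 := by push_cast; ring
  rw [hexp]
  congr 1
  -- ck k (i+1) * (2*(i+1)^2 + (i+1)) = ck k i * (k - i)
  unfold ck
  have hdf : (Nat.doubleFactorial (2 * (i + 1) + 1) : ℝ)
      = (2 * (i : ℝ) + 3) * (Nat.doubleFactorial (2 * i + 1) : ℝ) := by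
    have : 2 * (i + 1) + 1 = (2 * i + 1) + 2 := by ring
    rw [this, Nat.doubleFactorial_add_two]
    push_cast
    ring
  have hch : (k.choose (i + 1) : ℝ) * (i + 1) = (k.choose i : ℝ) * ((k : ℝ) - i) := by
    have := Nat.choose_succ_right_eq k i
    have h2 : ((k.choose (i + 1) * (i + 1) : ℕ) : ℝ) = ((k.choose i * (k - i) : ℕ) : ℝ) := by
      exact_mod_cast congrArg (Nat.cast : ℕ → ℝ) this
    push_cast [Nat.cast_sub hik.le] at h2
    push_cast
    linarith
  have hdf0 : (Nat.doubleFactorial (2 * i + 1) : ℝ) ≠ 0 := by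
    exact_mod_cast (Nat.doubleFactorial_pos _).ne'
  have hdf2 : (2 * (i : ℝ) + 3) ≠ 0 := by positivity
  rw [hdf]
  field_simp
  push_cast
  nlinarith [hch, sq_nonneg ((i:ℝ))]

lemma term_id (y : ℝ) (hy : y ≠ 0) (n : ℕ) (c : ℝ) :
    (1 / 2) * (c * (((2 * (n : ℤ) - 2 : ℤ) : ℝ) *
        (((2 * (n : ℤ) - 2 - 1 : ℤ) : ℝ) * y ^ (2 * (n : ℤ) - 2 - 1 - 1))))
      + (3 / y + y / 2) * (c * (((2 * (n : ℤ) - 2 : ℤ) : ℝ) * y ^ (2 * (n : ℤ) - 2 - 1)))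
      + (3 / y ^ 2 - 1 / 2) * (c * y ^ (2 * (n : ℤ) - 2))
    = c * (2 * (n : ℝ) ^ 2 + n) * y ^ (2 * (n : ℤ) - 4)
      + c * ((n : ℝ) - 3 / 2) * y ^ (2 * (n : ℤ) - 2) := by
  have e1 : (2 * (n : ℤ) - 2 - 1 - 1) = 2 * (n : ℤ) - 4 := by ring
  have e2 : y ^ (2 * (n : ℤ) - 2 - 1) = y ^ (2 * (n : ℤ) - 4) * y := by
    rw [← zpow_add_one₀ hy]; congr 1; ring
  have e3 : y ^ (2 * (n : ℤ) - 2) = y ^ (2 * (n : ℤ) - 4) * y * y := by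
    rw [show (2 * (n : ℤ) - 2) = (2 * (n : ℤ) - 4) + 1 + 1 by ring,
      zpow_add_one₀ hy, zpow_add_one₀ hy]
  rw [e1, e2, e3]
  have hy2 : y ^ 2 ≠ 0 := pow_ne_zero 2 hy
  field_simp
  push_cast
  ring

theorem stmt_16 (k : ℕ) (hk : 1 ≤ k) :
    ∀ y > (0:ℝ),
      (1 / 2) * deriv (deriv (phik k)) y
        + (3 / y + y / 2) * deriv (phik k) y
        + (3 / y ^ 2 - 1 / 2) * phik k y
      = ((k : ℝ) - 3 / 2) * phik k y := by
  intro y hy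
  have hy0 : y ≠ 0 := hy.ne'
  rw [deriv2_phik k hy0, deriv_phik k hy0, phik_eq k hy0]
  unfold g0 g1 g2
  rw [Finset.mul_sum, Finset.mul_sum, Finset.mul_sum, Finset.mul_sum,
    ← Finset.sum_add_distrib, ← Finset.sum_add_distrib]
  have : ∀ n ∈ Finset.range (k + 1),
      (1 / 2) * (ck k n * (((2 * (n : ℤ) - 2 : ℤ) : ℝ) *
          (((2 * (n : ℤ) - 2 - 1 : ℤ) : ℝ) * y ^ (2 * (n : ℤ) - 2 - 1 - 1))))
        + (3 / y + y / 2) * (ck k n * (((2 * (n : ℤ) - 2 : ℤ) : ℝ) * y ^ (2 * (n : ℤ) - 2 - 1)))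
        + (3 / y ^ 2 - 1 / 2) * (ck k n * y ^ (2 * (n : ℤ) - 2))
      = ck k n * (2 * (n : ℝ) ^ 2 + n) * y ^ (2 * (n : ℤ) - 4)
        + ck k n * ((n : ℝ) - 3 / 2) * y ^ (2 * (n : ℤ) - 2) :=
    fun n _ => term_id y hy0 n (ck k n)
  rw [Finset.sum_congr rfl this, Finset.sum_add_distrib, key k hy0,
    ← Finset.sum_add_distrib]
  refine Finset.sum_congr rfl fun n _ => ?_
  ring
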